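/- Let M and N be finite matroids on disjoint ground sets, and let P be the matroid on E(M) ∪ E(N) whose independent sets are exactly the sets I with I ∩ E(M) independent in M and |I ∩ E(N)| − r_N(I ∩ E(N)) ≤ r_M(E(M)) − |I ∩ E(M)| (the free product M □ N). Then for all X ⊆ E(M) and Y ⊆ E(N), r_P(X ∪ Y) = r_M(X) + r_N(Y) + min{ r_M(E(M)) − r_M(X), |Y| − r_N(Y) }. -/

import Mathlib

namespace Matroid

variable {α β : Type*}

/-- A circuit of a matroid: a minimal dependent set. -/
def IsCircuit' (M : Matroid α) (C : Set α) : Prop :=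
  M.Dep C ∧ ∀ D, D ⊂ C → M.Indep D

/-- A cyclic flat: a flat that is a (possibly empty) union of circuits. -/
def CyclicFlat (M : Matroid α) (X : Set α) : Prop :=
  M.IsFlat X ∧ ∀ e ∈ X, ∃ C, M.IsCircuit' C ∧ C ⊆ X ∧ e ∈ C

/-- The rank of a set: the maximum size of an independent subset. -/
noncomputable def rk (M : Matroid α) (X : Set α) : ℕ :=
  sSup {n | ∃ I, M.Indep I ∧ I ⊆ X ∧ I.ncard = n}

/-- Deletion of a set from a matroid. -/
def del (M : Matroid α) (D : Set α) : Matroid α := M ↾ (M.E \ D)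

/-- Contraction of a set in a matroid. -/
def con (M : Matroid α) (C : Set α) : Matroid α := (M✶ ↾ (M.E \ C))✶

/-- `N` is a minor of `M` if it is obtained from `M` by a contraction and a deletion. -/
def IsMinorOf (N M : Matroid α) : Prop := ∃ C D, N = (M.con C).del D

/-- Matroid isomorphism: a bijection of ground sets preserving independence. -/
def IsIsoTo (M : Matroid α) (N : Matroid β) : Prop :=
  ∃ e : M.E ≃ N.E, ∀ I : Set M.E,
    M.Indep (Subtype.val '' I) ↔ N.Indep (Subtype.val '' (e '' I))

end Matroid

namespace Matroid

variable {α : Type*} {M : Matroid α} {I J X Y Z : Set α}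

lemma ncard_le_of_basis'_aux [M.Finite] (hJ : M.Indep J) (hJX : J ⊆ X) (hI : M.IsBasis' I X) :
    J.ncard ≤ I.ncard := by
  obtain ⟨J', hJ', hJJ'⟩ := hJ.subset_isBasis'_of_subset hJX
  have h1 : J'.encard = I.encard := hJ'.encard_eq_encard hI
  have hfin : J'.Finite := M.set_finite J' hJ'.indep.subset_ground
  calc J.ncard ≤ J'.ncard := Set.ncard_le_ncard hJJ' hfin
    _ = I.ncard := by rw [Set.ncard_def, h1, ← Set.ncard_def]

lemma rk_eq_of_basis'_aux [M.Finite] (hI : M.IsBasis' I X) : M.rk X = I.ncard := by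
  have hmem : I.ncard ∈ {n | ∃ I', M.Indep I' ∧ I' ⊆ X ∧ I'.ncard = n} :=
    ⟨I, hI.indep, hI.subset, rfl⟩
  have hub : ∀ n ∈ {n | ∃ I', M.Indep I' ∧ I' ⊆ X ∧ I'.ncard = n}, n ≤ I.ncard := by
    rintro n ⟨J, hJ, hJX, rfl⟩
    exact ncard_le_of_basis'_aux hJ hJX hI
  exact le_antisymm (csSup_le ⟨_, hmem⟩ hub) (le_csSup ⟨I.ncard, hub⟩ hmem)

lemma ncard_le_rk_aux [M.Finite] (hJ : M.Indep J) (hJX : J ⊆ X) : J.ncard ≤ M.rk X := by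
  obtain ⟨I, hI⟩ := M.exists_isBasis' X
  rw [rk_eq_of_basis'_aux hI]
  exact ncard_le_of_basis'_aux hJ hJX hI

lemma rk_mono_aux [M.Finite] (hXY : X ⊆ Y) : M.rk X ≤ M.rk Y := by
  obtain ⟨I, hI⟩ := M.exists_isBasis' X
  rw [rk_eq_of_basis'_aux hI]
  exact ncard_le_rk_aux hI.indep (hI.subset.trans hXY)

lemma rk_indep_aux [M.Finite] (hI : M.Indep I) : M.rk I = I.ncard :=
  rk_eq_of_basis'_aux hI.isBasis_self.isBasis'

lemma rk_le_ncard_aux [M.Finite] (X : Set α) (hX : X.Finite) : M.rk X ≤ X.ncard := by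
  obtain ⟨I, hI⟩ := M.exists_isBasis' X
  rw [rk_eq_of_basis'_aux hI]
  exact Set.ncard_le_ncard hI.subset hX

/-- Nullity is monotone: for `Z ⊆ Y` with `Y` finite, `rk Y ≤ rk Z + |Y \ Z|`. -/
lemma rk_le_rk_add_ncard_diff_aux [M.Finite] (hZY : Z ⊆ Y) (hY : Y.Finite) :
    M.rk Y ≤ M.rk Z + (Y \ Z).ncard := by
  obtain ⟨I, hI⟩ := M.exists_isBasis' Y
  have hIfin : I.Finite := hY.subset hI.subset
  rw [rk_eq_of_basis'_aux hI]
  have h1 : I.ncard ≤ (I ∩ Z).ncard + (I \ Z).ncard :=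
    (Set.ncard_inter_add_ncard_diff_eq_ncard I Z hIfin).symm.le
  have h2 : (I ∩ Z).ncard ≤ M.rk Z :=
    ncard_le_rk_aux (hI.indep.subset Set.inter_subset_left) Set.inter_subset_right
  have h3 : (I \ Z).ncard ≤ (Y \ Z).ncard :=
    Set.ncard_le_ncard (Set.diff_subset_diff_left hI.subset) (hY.subset Set.diff_subset)
  omega

end Matroid

/-- Rank function of the free product: if `P` is the matroid on `E(M) ∪ E(N)` whose
independent sets are the sets `I` with `I ∩ E(M)` independent in `M` and
`ν_N (I ∩ E(N)) ≤ r M - |I ∩ E(M)|`, then for `X ⊆ E(M)` and `Y ⊆ E(N)`,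
`r_P (X ∪ Y) = r_M X + r_N Y + min (r M - r_M X) (ν_N Y)`. -/
theorem free_product_rank {α : Type*} (M N : Matroid α) [M.Finite] [N.Finite]
    (hdisj : Disjoint M.E N.E) (P : Matroid α) (hPE : P.E = M.E ∪ N.E)
    (hPI : ∀ I : Set α, P.Indep I ↔
      (I ⊆ M.E ∪ N.E ∧ M.Indep (I ∩ M.E) ∧
        ((I ∩ N.E).ncard : ℤ) - (N.rk (I ∩ N.E) : ℤ) ≤
          (M.rk M.E : ℤ) - ((I ∩ M.E).ncard : ℤ))) :
    ∀ X ⊆ M.E, ∀ Y ⊆ N.E,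
      (P.rk (X ∪ Y) : ℤ) = (M.rk X : ℤ) + (N.rk Y : ℤ) +
        min ((M.rk M.E : ℤ) - (M.rk X : ℤ)) ((Y.ncard : ℤ) - (N.rk Y : ℤ)) := by
  intro X hX Y hY
  have hYfin : Y.Finite := N.set_finite Y hY
  set a := M.rk X with ha
  set b := N.rk Y with hb
  set r := M.rk M.E with hr
  have haR : a ≤ r := Matroid.rk_mono_aux hX
  have hbY : b ≤ Y.ncard := Matroid.rk_le_ncard_aux Y hYfin
  set k : ℕ := min (r - a) (Y.ncard - b) with hk
  -- construct a large independent set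
  obtain ⟨BX, hBX⟩ := M.exists_isBasis' X
  have hBXcard : BX.ncard = a := (Matroid.rk_eq_of_basis'_aux hBX).symm
  have hBXX : BX ⊆ X := hBX.subset
  obtain ⟨BY, hBY⟩ := N.exists_isBasis' Y
  have hBYcard : BY.ncard = b := (Matroid.rk_eq_of_basis'_aux hBY).symm
  obtain ⟨Z, hBYZ, hZY, hZcard⟩ :=
    Set.exists_subsuperset_card_eq hBY.subset (n := b + k) (by omega) (by omega)
  have hZrk : N.rk Z = b := by
    refine le_antisymm (hb ▸ Matroid.rk_mono_aux hZY) ?_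
    have := Matroid.ncard_le_rk_aux hBY.indep hBYZ
    omega
  set I₀ : Set α := BX ∪ Z with hI₀
  have hI₀M : I₀ ∩ M.E = BX := by
    rw [hI₀, Set.union_inter_distrib_right,
      Set.inter_eq_self_of_subset_left (hBXX.trans hX),
      (hdisj.symm.mono_left (hZY.trans hY)).inter_eq, Set.union_empty]
  have hI₀N : I₀ ∩ N.E = Z := by
    rw [hI₀, Set.union_inter_distrib_right,
      (hdisj.mono_left (hBXX.trans hX)).inter_eq,
      Set.inter_eq_self_of_subset_left (hZY.trans hY), Set.empty_union]
  have hI₀sub : I₀ ⊆ X ∪ Y := Set.union_subset_union hBXX hZY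
  have hI₀indep : P.Indep I₀ := by
    rw [hPI]
    refine ⟨hI₀sub.trans (Set.union_subset_union hX hY), ?_, ?_⟩
    · rw [hI₀M]; exact hBX.indep
    · rw [hI₀M, hI₀N, hZrk, hZcard, hBXcard]
      have : k ≤ r - a := min_le_left _ _
      push_cast
      omega
  have hI₀card : I₀.ncard = a + b + k := by
    rw [hI₀, Set.ncard_union_eq (hdisj.mono (hBXX.trans hX) (hZY.trans hY))
      (M.set_finite BX hBX.indep.subset_ground) (hYfin.subset hZY), hBXcard, hZcard]
    omega
  -- upper bound for all independent subsets
  have hub : ∀ n ∈ {n | ∃ J, P.Indep J ∧ J ⊆ X ∪ Y ∧ J.ncard = n}, n ≤ a + b + k := by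
    rintro n ⟨J, hJ, hJXY, rfl⟩
    rw [hPI] at hJ
    obtain ⟨hJsub, hJM, hJnull⟩ := hJ
    have hJfin : J.Finite := (M.ground_finite.union N.ground_finite).subset hJsub
    have hJMX : J ∩ M.E ⊆ X := by
      intro x hx
      rcases hJXY hx.1 with h | h
      · exact h
      · exact absurd hx.2 (fun hm => hdisj.ne_of_mem hm (hY h) rfl)
    have hJNY : J ∩ N.E ⊆ Y := by
      intro x hx
      rcases hJXY hx.1 with h | h
      · exact absurd hx.2 (fun hm => hdisj.ne_of_mem (hX h) hm rfl)
      · exact h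
    have hsplit : J.ncard = (J ∩ M.E).ncard + (J ∩ N.E).ncard := by
      conv_lhs => rw [show J = (J ∩ M.E) ∪ (J ∩ N.E) by
        rw [← Set.inter_union_distrib_left, Set.inter_eq_self_of_subset_left hJsub]]
      exact Set.ncard_union_eq (hdisj.mono Set.inter_subset_right Set.inter_subset_right)
        (hJfin.subset Set.inter_subset_left) (hJfin.subset Set.inter_subset_left)
    have h1 : (J ∩ M.E).ncard ≤ a := Matroid.ncard_le_rk_aux hJM hJMX
    have h2 : N.rk (J ∩ N.E) ≤ b := hb ▸ Matroid.rk_mono_aux hJNY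
    -- nullity monotonicity
    have h3 : b ≤ N.rk (J ∩ N.E) + (Y \ (J ∩ N.E)).ncard :=
      hb ▸ Matroid.rk_le_rk_add_ncard_diff_aux hJNY hYfin
    have h4 : (J ∩ N.E).ncard + (Y \ (J ∩ N.E)).ncard = Y.ncard := by
      rw [add_comm, Set.ncard_diff_add_ncard_of_subset hJNY hYfin]
    have h5 : (J ∩ N.E).ncard ≤ N.rk (J ∩ N.E) + (Y.ncard - b) := by omega
    have h6 : ((J ∩ N.E).ncard : ℤ) ≤ (N.rk (J ∩ N.E) : ℤ) + ((r : ℤ) - ((J ∩ M.E).ncard : ℤ)) := by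
      linarith [hJnull]
    have h7 : ((J ∩ M.E).ncard : ℤ) ≤ (a : ℤ) := by exact_mod_cast h1
    push_cast at h5 ⊢
    omega
  have hmem : a + b + k ∈ {n | ∃ J, P.Indep J ∧ J ⊆ X ∪ Y ∧ J.ncard = n} :=
    ⟨I₀, hI₀indep, hI₀sub, hI₀card⟩
  have hPrk : P.rk (X ∪ Y) = a + b + k :=
    le_antisymm (csSup_le ⟨_, hmem⟩ hub) (le_csSup ⟨a + b + k, hub⟩ hmem)
  rw [hPrk, hk]
  push_cast [Nat.cast_min, Nat.cast_sub haR, Nat.cast_sub hbY]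
  ring
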